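/- Every subgroup of Q_{2^∞} isomorphic to the quaternion group Q_8 is conjugate in Q_{2^∞} to W = ⟨t_2, y⟩. -/

import Mathlib

noncomputable section

open scoped Quaternion

/-- The embedding of the complex numbers in the real quaternions. -/
def cplxToQuat (z : ℂ) : ℍ[ℝ] := ⟨z.re, z.im, 0, 0⟩

lemma cplxToQuat_ne_zero (z : ℂ) (hz : z ≠ 0) : cplxToQuat z ≠ 0 := by
  intro h
  apply hz
  have h1 : (cplxToQuat z).re = 0 := by rw [h]; rfl
  have h2 : (cplxToQuat z).imI = 0 := by rw [h]; rfl
  exact Complex.ext h1 h2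

/-- The quaternion `j`, as a unit. -/
def jQuat : ℍ[ℝ]ˣ :=
  Units.mk0 (⟨0, 0, 1, 0⟩ : ℍ[ℝ])
    (fun h => one_ne_zero (α := ℝ) (by simpa using congrArg QuaternionAlgebra.imJ h))

/-- The primitive `2^n`-th root of unity `exp(2πi/2^n)`, viewed as a unit quaternion. -/
def zetaQuat (n : ℕ) : ℍ[ℝ]ˣ :=
  Units.mk0 (cplxToQuat (Complex.exp (2 * Real.pi * Complex.I / (2 ^ n))))
    (cplxToQuat_ne_zero _ (Complex.exp_ne_zero _))

/-- The infinite quaternion 2-group `Q_{2^∞}`: the subgroup of the unit quaternions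
generated by `j` together with all `2`-power complex roots of unity.  It is the
nonsplit extension of `ℤ/2` by the Prüfer 2-group in which `y = j` acts by inversion
and `y² = t₁ = -1`. -/
def QInf : Subgroup ℍ[ℝ]ˣ := Subgroup.closure ({jQuat} ∪ Set.range zetaQuat)

/-- The generator `y` (of order 4) of `Q_{2^∞}`. -/
def QInf.y : ↥QInf := ⟨jQuat, Subgroup.subset_closure (Set.mem_union_left _ rfl)⟩

/-- The element `t_n` of order `2^n` in the maximal torus of `Q_{2^∞}`,
with `t_{n+1}² = t_n`. -/
def QInf.t (n : ℕ) : ↥QInf :=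
  ⟨zetaQuat n, Subgroup.subset_closure (Set.mem_union_right _ ⟨n, rfl⟩)⟩

/-- The maximal torus `T = ℤ(2^∞)` of `Q_{2^∞}`. -/
def QInf.torus : Subgroup ↥QInf := Subgroup.closure (Set.range QInf.t)
def cHom : ℂ →+* ℍ[ℝ] where
  toFun := cplxToQuat
  map_one' := by ext <;> simp [cplxToQuat]
  map_mul' z w := by
    ext <;> simp only [Quaternion.re_mul, Quaternion.imI_mul, Quaternion.imJ_mul,
      Quaternion.imK_mul] <;> simp [cplxToQuat, Complex.mul_re, Complex.mul_im]
  map_zero' := by ext <;> simp [cplxToQuat]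
  map_add' z w := by ext <;> simp only [Quaternion.re_add, Quaternion.imI_add, Quaternion.imJ_add,
    Quaternion.imK_add] <;> simp [cplxToQuat]

lemma c_inj : Function.Injective cHom := by
  intro z w h
  exact Complex.ext (congrArg QuaternionAlgebra.re h) (congrArg QuaternionAlgebra.imI h)

def jv : ℍ[ℝ] := ⟨0, 0, 1, 0⟩

lemma jv_mul_c (z : ℂ) : jv * cHom z = cHom ((starRingEnd ℂ) z) * jv := by
  ext <;> simp only [Quaternion.re_mul, Quaternion.imI_mul, Quaternion.imJ_mul,
    Quaternion.imK_mul] <;> simp [cHom, cplxToQuat, jv] <;> ring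

lemma jv_sq : jv * jv = -1 := by
  ext <;> simp only [Quaternion.re_mul, Quaternion.imI_mul, Quaternion.imJ_mul, Quaternion.imK_mul] <;> simp [jv]

lemma jv_ne_zero : jv ≠ 0 := by
  intro h
  simpa [jv] using congrArg QuaternionAlgebra.imJ h

lemma jv_inv : jv⁻¹ = -jv := by
  have : jv * (-jv) = 1 := by rw [mul_neg, jv_sq]; simp
  exact inv_eq_of_mul_eq_one_right this

lemma c_eq_c_mul_jv {z w : ℂ} (h : cHom z = cHom w * jv) : z = 0 := by
  have h1 := congrArg QuaternionAlgebra.imJ h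
  have h2 := congrArg QuaternionAlgebra.imK h
  simp only [Quaternion.imJ_mul, Quaternion.imK_mul] at h1 h2
  simp [cHom, cplxToQuat, jv] at h1 h2
  have hw : w = 0 := Complex.ext h1.symm h2.symm
  apply c_inj
  rw [map_zero, h, hw, map_zero, zero_mul]

lemma jQuat_val : (jQuat : ℍ[ℝ]) = jv := rfl

/-- the 2-power roots of unity predicate -/
def isU (z : ℂ) : Prop := ∃ n : ℕ, z ^ 2 ^ n = 1

lemma isU.ne_zero {z : ℂ} (h : isU z) : z ≠ 0 := by
  obtain ⟨n, hn⟩ := h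
  intro h0
  rw [h0, zero_pow (pow_ne_zero n two_ne_zero)] at hn
  exact zero_ne_one hn

lemma isU.mul {z w : ℂ} (hz : isU z) (hw : isU w) : isU (z * w) := by
  obtain ⟨n, hn⟩ := hz
  obtain ⟨m, hm⟩ := hw
  refine ⟨n + m, ?_⟩
  rw [mul_pow, pow_add, pow_mul, hn, one_pow, one_mul, mul_comm (2^n) (2^m), pow_mul, hm,
    one_pow]

lemma isU.inv {z : ℂ} (hz : isU z) : isU z⁻¹ := by
  obtain ⟨n, hn⟩ := hz
  exact ⟨n, by rw [inv_pow, hn, inv_one]⟩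

lemma isU_one : isU 1 := ⟨0, by norm_num⟩

lemma isU_neg_one : isU (-1) := ⟨1, by norm_num⟩

lemma isU.neg {z : ℂ} (hz : isU z) : isU (-z) := by
  have := isU_neg_one.mul hz
  simpa using this

lemma isU.norm_one {z : ℂ} (hz : isU z) : ‖z‖ = 1 := by
  obtain ⟨n, hn⟩ := hz
  have h1 : ‖z‖ ^ 2 ^ n = 1 := by
    rw [← norm_pow, hn, NormOneClass.norm_one]
  rcases lt_trichotomy ‖z‖ 1 with h | h | h
  · exfalso
    have := pow_lt_one₀ (norm_nonneg z) h (pow_ne_zero n two_ne_zero)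
    rw [h1] at this; exact lt_irrefl 1 this
  · exact h
  · exfalso
    have := one_lt_pow₀ h (pow_ne_zero n two_ne_zero)
    rw [h1] at this; exact lt_irrefl 1 this

lemma isU.conj_eq_inv {z : ℂ} (hz : isU z) : (starRingEnd ℂ) z = z⁻¹ := by
  have h : z * (starRingEnd ℂ) z = 1 := by
    rw [Complex.mul_conj]
    norm_cast
    rw [Complex.normSq_eq_norm_sq, hz.norm_one, one_pow]
  exact eq_inv_of_mul_eq_one_right h

lemma isU.conj {z : ℂ} (hz : isU z) : isU ((starRingEnd ℂ) z) := by
  rw [hz.conj_eq_inv]; exact hz.inv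

/-- structure subgroup -/
def Sgrp : Subgroup ℍ[ℝ]ˣ where
  carrier := {g | ∃ z : ℂ, isU z ∧ (((g : ℍ[ℝ]ˣ) : ℍ[ℝ]) = cHom z ∨ ((g : ℍ[ℝ]ˣ) : ℍ[ℝ]) = cHom z * jv)}
  one_mem' := ⟨1, isU_one, Or.inl (by simp)⟩
  mul_mem' := by
    rintro a b ⟨z, hz, hza | hza⟩ ⟨w, hw, hwb | hwb⟩
    · exact ⟨z * w, hz.mul hw, Or.inl (by rw [Units.val_mul, hza, hwb, map_mul])⟩
    · exact ⟨z * w, hz.mul hw, Or.inr (by rw [Units.val_mul, hza, hwb, ← mul_assoc, map_mul])⟩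
    · refine ⟨z * (starRingEnd ℂ) w, hz.mul hw.conj, Or.inr ?_⟩
      rw [Units.val_mul, hza, hwb, mul_assoc, jv_mul_c, ← mul_assoc, map_mul]
    · refine ⟨-(z * (starRingEnd ℂ) w), (hz.mul hw.conj).neg, Or.inl ?_⟩
      rw [Units.val_mul, hza, hwb, map_neg, map_mul]
      calc cHom z * jv * (cHom w * jv) = cHom z * (jv * cHom w) * jv := by
              simp only [mul_assoc]
        _ = cHom z * (cHom ((starRingEnd ℂ) w) * jv) * jv := by rw [jv_mul_c]
        _ = cHom z * cHom ((starRingEnd ℂ) w) * (jv * jv) := by simp only [mul_assoc]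
        _ = -(cHom z * cHom ((starRingEnd ℂ) w)) := by rw [jv_sq, mul_neg_one]
  inv_mem' := by
    rintro a ⟨z, hz, hza | hza⟩
    · refine ⟨z⁻¹, hz.inv, Or.inl ?_⟩
      rw [Units.val_inv_eq_inv_val, hza, map_inv₀]
    · refine ⟨-((starRingEnd ℂ) (z⁻¹)), (hz.inv.conj).neg, Or.inr ?_⟩
      rw [Units.val_inv_eq_inv_val, hza, mul_inv_rev, jv_inv, neg_mul, ← map_inv₀, jv_mul_c,
        map_neg, neg_mul]

lemma zeta_pow (n : ℕ) : Complex.exp (2 * Real.pi * Complex.I / (2 ^ n)) ^ 2 ^ n = 1 := by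
  rw [← Complex.exp_nat_mul]
  have hc : ((2 ^ n : ℕ) : ℂ) = (2 : ℂ) ^ n := by push_cast; ring
  have h : ((2 : ℂ) ^ n) * (2 * Real.pi * Complex.I / 2 ^ n) = 2 * Real.pi * Complex.I := by
    field_simp
  rw [hc, h, Complex.exp_two_pi_mul_I]

lemma QInf_le_Sgrp : QInf ≤ Sgrp := by
  rw [QInf, Subgroup.closure_le]
  rintro x (rfl | ⟨n, rfl⟩)
  · exact ⟨1, isU_one, Or.inr (by rw [map_one, one_mul]; rfl)⟩
  · exact ⟨Complex.exp (2 * Real.pi * Complex.I / (2 ^ n)), ⟨n, zeta_pow n⟩, Or.inl rfl⟩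

/-- coercion from QInf to the quaternions, as a monoid hom. -/
def val2 : ↥QInf →* ℍ[ℝ] := (Units.coeHom ℍ[ℝ]).comp QInf.subtype

lemma val2_inj : Function.Injective val2 := fun a b h => Subtype.ext (Units.ext h)

lemma val2_inv (a : ↥QInf) : val2 a⁻¹ = (val2 a)⁻¹ :=
  Units.val_inv_eq_inv_val _

lemma val2_form (v : ↥QInf) :
    ∃ z : ℂ, isU z ∧ (val2 v = cHom z ∨ val2 v = cHom z * jv) :=
  QInf_le_Sgrp v.2

lemma val2_y : val2 QInf.y = jv := rfl

lemma val2_t (n : ℕ) : val2 (QInf.t n) = cHom (Complex.exp (2 * Real.pi * Complex.I / (2 ^ n))) :=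
  rfl

lemma exp_t2 : Complex.exp (2 * Real.pi * Complex.I / (2 ^ 2)) = Complex.I := by
  have h : (2 * Real.pi * Complex.I / (2 ^ 2) : ℂ) = (Real.pi / 2 : ℝ) * Complex.I := by
    push_cast; ring
  rw [h, Complex.exp_mul_I, ← Complex.ofReal_cos, ← Complex.ofReal_sin, Real.cos_pi_div_two,
    Real.sin_pi_div_two]
  simp

lemma val2_t2 : val2 (QInf.t 2) = cHom Complex.I := by rw [val2_t, exp_t2]

lemma pow4_cases {z : ℂ} (h : z ^ 4 = 1) : z = 1 ∨ z = -1 ∨ z = Complex.I ∨ z = -Complex.I := by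
  have h2 : (z ^ 2 - 1) * (z ^ 2 + 1) = 0 := by linear_combination h
  rcases mul_eq_zero.1 h2 with h3 | h3
  · have h4 : (z - 1) * (z + 1) = 0 := by linear_combination h3
    rcases mul_eq_zero.1 h4 with h5 | h5
    · exact Or.inl (by linear_combination h5)
    · exact Or.inr (Or.inl (by linear_combination h5))
  · have h4 : (z - Complex.I) * (z + Complex.I) = 0 := by
      linear_combination h3 - Complex.I_sq
    rcases mul_eq_zero.1 h4 with h5 | h5
    · exact Or.inr (Or.inr (Or.inl (by linear_combination h5)))
    · exact Or.inr (Or.inr (Or.inr (by linear_combination h5)))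

lemma val2_cHom_pow4 {v : ↥QInf} {z : ℂ} (hv : val2 v = cHom z) (h4 : v ^ 4 = 1) :
    z ^ 4 = 1 := by
  apply c_inj
  rw [map_pow, ← hv, ← map_pow, h4, map_one, map_one]

/-- every torus-type element with fourth power one lies in the closure of {t 2, y} -/
lemma torus_mem_closure {v : ↥QInf} {z : ℂ} (hv : val2 v = cHom z) (h4 : v ^ 4 = 1) :
    v ∈ Subgroup.closure {QInf.t 2, QInf.y} := by
  have ht2 : QInf.t 2 ∈ Subgroup.closure {QInf.t 2, QInf.y} :=
    Subgroup.subset_closure (Set.mem_insert _ _)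
  rcases pow4_cases (val2_cHom_pow4 hv h4) with rfl | rfl | rfl | rfl
  · have : v = 1 := val2_inj (by rw [hv, map_one, map_one])
    rw [this]; exact one_mem _
  · have : v = (QInf.t 2) ^ 2 := by
      apply val2_inj
      rw [hv, map_pow, val2_t2, ← map_pow, Complex.I_sq]
    rw [this]; exact pow_mem ht2 2
  · have : v = QInf.t 2 := val2_inj (by rw [hv, val2_t2])
    rw [this]; exact ht2
  · have : v = (QInf.t 2)⁻¹ := by
      apply val2_inj
      rw [hv, val2_inv, val2_t2, ← map_inv₀, Complex.inv_I]
    rw [this]; exact inv_mem ht2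

lemma t2_mem {G : Subgroup ↥QInf} {v : ↥QInf} (hvG : v ∈ G) {z : ℂ}
    (hv : val2 v = cHom z) (h4 : z ^ 4 = 1) (h2 : z ^ 2 ≠ 1) : QInf.t 2 ∈ G := by
  rcases pow4_cases h4 with rfl | rfl | rfl | rfl
  · exact absurd (one_pow 2) h2
  · exact absurd (by norm_num) h2
  · have : QInf.t 2 = v := val2_inj (by rw [hv, val2_t2])
    rw [this]; exact hvG
  · have : QInf.t 2 = v⁻¹ := by
      apply val2_inj
      rw [val2_inv, hv, ← map_inv₀, val2_t2]
      congr 1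
      rw [inv_neg, Complex.inv_I, neg_neg]
    rw [this]; exact inv_mem hvG

lemma jmul (z w : ℂ) (hw : isU w) :
    (cHom z * jv) * (cHom w * jv) = cHom (z * w⁻¹) * -1 := by
  rw [mul_assoc, ← mul_assoc jv, jv_mul_c, ← mul_assoc, ← mul_assoc, ← map_mul,
    hw.conj_eq_inv, mul_assoc, jv_sq]

lemma t2_mem_aux {G : Subgroup ↥QInf} (hG4 : ∀ w ∈ G, w ^ 4 = 1)
    {a b : ↥QInf} (ha : a ∈ G) (hab : a * b ≠ b * a) {z w : ℂ}
    (hza : val2 a = cHom z) (hwb : val2 b = cHom w * jv) : QInf.t 2 ∈ G := by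
  refine t2_mem ha hza (val2_cHom_pow4 hza (hG4 a ha)) fun h2 => hab ?_
  have h4 : (z - 1) * (z + 1) = 0 := by linear_combination h2
  apply val2_inj
  rw [map_mul, map_mul, hza]
  rcases mul_eq_zero.1 h4 with h5 | h5
  · have : z = 1 := by linear_combination h5
    rw [this, map_one, one_mul, mul_one]
  · have : z = -1 := by linear_combination h5
    rw [this, map_neg, map_one, neg_one_mul, mul_neg_one]

/-- From a noncommuting pair in a subgroup `G` of `QInf` all of whose elements have fourth
power one, we can find `t 2` in `G`. -/
lemma t2_mem_of_noncomm {G : Subgroup ↥QInf} (hG4 : ∀ w ∈ G, w ^ 4 = 1)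
    {a b : ↥QInf} (ha : a ∈ G) (hb : b ∈ G) (hab : a * b ≠ b * a) : QInf.t 2 ∈ G := by
  obtain ⟨z, hz, hza | hza⟩ := val2_form a <;> obtain ⟨w, hw, hwb | hwb⟩ := val2_form b
  · -- both torus: they commute, contradiction
    exact absurd (val2_inj (by rw [map_mul, map_mul, hza, hwb, ← map_mul, ← map_mul,
      mul_comm z w])) hab
  · exact t2_mem_aux hG4 ha hab hza hwb
  · exact t2_mem_aux hG4 hb (fun h => hab h.symm) hwb hza
  · -- both j-type
    have hv : val2 (a * b⁻¹) = cHom (z * w⁻¹) := by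
      rw [map_mul, val2_inv, hza, hwb, mul_inv_rev, jv_inv, map_mul, map_inv₀, ← mul_assoc,
        mul_assoc (cHom z) jv, mul_neg, jv_sq]
      simp [mul_assoc]
    refine t2_mem (mul_mem ha (inv_mem hb)) hv
      (val2_cHom_pow4 hv (hG4 _ (mul_mem ha (inv_mem hb)))) fun h2 => hab ?_
    -- from (z w⁻¹)^2 = 1 we get z * w⁻¹ = w * z⁻¹, hence a b = b a
    have hzw : z * w⁻¹ = w * z⁻¹ := by
      have h1 : (z * w⁻¹) * (z * w⁻¹) = 1 := by rw [← sq]; exact h2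
      calc z * w⁻¹ = (z * w⁻¹)⁻¹ := eq_inv_of_mul_eq_one_right h1
        _ = w * z⁻¹ := by rw [mul_inv_rev, inv_inv]
    apply val2_inj
    rw [map_mul, map_mul, hza, hwb, jmul z w hw, jmul w z hz, hzw]

lemma q8_pow4 : ∀ x : QuaternionGroup 2, x ^ 4 = 1 := by decide

lemma q8_noncomm : ∃ x y : QuaternionGroup 2, x * y ≠ y * x := by decide

lemma zeta_sq (n : ℕ) :
    Complex.exp (2 * Real.pi * Complex.I / (2 ^ (n + 1))) ^ 2
      = Complex.exp (2 * Real.pi * Complex.I / (2 ^ n)) := by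
  rw [sq, ← Complex.exp_add]
  congr 1
  have h1 : ((2 : ℂ) ^ (n + 1)) ≠ 0 := pow_ne_zero _ two_ne_zero
  have h2 : ((2 : ℂ) ^ n) ≠ 0 := pow_ne_zero _ two_ne_zero
  field_simp
  ring

/-- Every subgroup of `Q_{2^∞}` isomorphic to the quaternion group `Q₈` is conjugate
in `Q_{2^∞}` to `W = ⟨t₂, y⟩`. -/
theorem QInf_Q8_subgroups_conjugate (W : Subgroup ↥QInf)
    (hW : Nonempty (↥W ≃* QuaternionGroup 2)) :
    ∃ g : ↥QInf,
      Subgroup.map (MulAut.conj g).toMonoidHom W = Subgroup.closure {QInf.t 2, QInf.y} := by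
  obtain ⟨e⟩ := hW
  -- every element of W has fourth power 1
  have hW4 : ∀ v ∈ W, v ^ 4 = (1 : ↥QInf) := by
    intro v hv
    have h : (⟨v, hv⟩ : ↥W) ^ 4 = 1 := e.injective (by rw [map_pow, map_one]; exact q8_pow4 _)
    simpa using congrArg Subtype.val h
  -- W is nonabelian
  have hnc : ∃ a ∈ W, ∃ b ∈ W, a * b ≠ b * a := by
    obtain ⟨x, y', hxy⟩ := q8_noncomm
    refine ⟨(e.symm x : ↥W), (e.symm x).2, (e.symm y' : ↥W), (e.symm y').2, fun h => hxy ?_⟩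
    have h2 : (e.symm x) * (e.symm y') = (e.symm y') * (e.symm x) := Subtype.ext h
    simpa using congrArg e h2
  -- W contains a j-type element
  have hjty : ∃ w₀ ∈ W, ∃ z₀ : ℂ, isU z₀ ∧ val2 w₀ = cHom z₀ * jv := by
    obtain ⟨a, ha, b, hb, hab⟩ := hnc
    obtain ⟨z, hz, hza | hza⟩ := val2_form a
    · obtain ⟨w, hw, hwb | hwb⟩ := val2_form b
      · exact absurd (val2_inj (by rw [map_mul, map_mul, hza, hwb, ← map_mul, ← map_mul,
          mul_comm z w])) hab
      · exact ⟨b, hb, w, hw, hwb⟩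
    · exact ⟨a, ha, z, hz, hza⟩
  obtain ⟨w₀, hw₀, z₀, hz₀, hval⟩ := hjty
  obtain ⟨n, hn⟩ := hz₀
  have h2n : (2 : ℕ) ^ n ≠ 0 := pow_ne_zero n two_ne_zero
  haveI : NeZero ((2 : ℕ) ^ n) := ⟨h2n⟩
  obtain ⟨i, hi, hzi⟩ := (Complex.isPrimitiveRoot_exp (2 ^ n) h2n).eq_pow_of_pow_eq_one hn
  set ε := Complex.exp (2 * Real.pi * Complex.I / (2 ^ (n + 1))) with hεdef
  have hε1 : ε ^ 2 ^ (n + 1) = 1 := zeta_pow (n + 1)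
  have hcast : (((2 : ℕ) ^ n : ℕ) : ℂ) = (2 : ℂ) ^ n := by push_cast; ring
  have hε2 : ε ^ 2 = Complex.exp (2 * Real.pi * Complex.I / ((2 : ℕ) ^ n : ℕ)) := by
    rw [zeta_sq n, hcast]
  set m := 2 ^ (n + 1) - i with hm
  have hiLe : i ≤ 2 ^ (n + 1) := by
    have h1 : (2 : ℕ) ^ n ≤ 2 ^ (n + 1) := Nat.pow_le_pow_right (by norm_num) (Nat.le_succ n)
    omega
  set u := ε ^ m with hu
  have hUu : isU u := ⟨n + 1, by rw [hu, ← pow_mul, mul_comm, pow_mul, hε1, one_pow]⟩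
  have hukey : u ^ 2 * z₀ = 1 := by
    rw [← hzi, ← hε2, hu, ← pow_mul, ← pow_mul, ← pow_add]
    have hexp : m * 2 + 2 * i = 2 ^ (n + 1) * 2 := by omega
    rw [hexp, pow_mul, hε1, one_pow]
  set g : ↥QInf := QInf.t (n + 1) ^ m with hgdef
  have hg : val2 g = cHom u := by rw [hgdef, map_pow, val2_t, ← map_pow]
  refine ⟨g, ?_⟩
  set W' := Subgroup.map (MulAut.conj g).toMonoidHom W with hW'
  -- the conjugated element is y
  have hy' : QInf.y ∈ W' := by
    refine ⟨w₀, hw₀, ?_⟩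
    have hju : jv * (cHom u)⁻¹ = cHom u * jv := by
      rw [← map_inv₀, jv_mul_c, (hUu.inv).conj_eq_inv, inv_inv]
    apply val2_inj
    have happ : (MulAut.conj g).toMonoidHom w₀ = g * w₀ * g⁻¹ := rfl
    rw [happ, map_mul, map_mul, val2_inv, hg, hval, val2_y]
    calc cHom u * (cHom z₀ * jv) * (cHom u)⁻¹
        = cHom u * cHom z₀ * (jv * (cHom u)⁻¹) := by simp only [mul_assoc]
      _ = cHom u * cHom z₀ * (cHom u * jv) := by rw [hju]
      _ = cHom u * cHom z₀ * cHom u * jv := by simp only [mul_assoc]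
      _ = cHom (u ^ 2 * z₀) * jv := by
          rw [← map_mul, ← map_mul]
          congr 1
          ring
      _ = jv := by rw [hukey, map_one, one_mul]
  -- all fourth powers in W' are 1
  have hW'4 : ∀ w ∈ W', w ^ 4 = 1 := by
    rintro _ ⟨v, hv, rfl⟩
    rw [← map_pow, hW4 v hv, map_one]
  -- t 2 ∈ W'
  have ht2' : QInf.t 2 ∈ W' := by
    obtain ⟨a, ha, b, hb, hab⟩ := hnc
    refine t2_mem_of_noncomm hW'4 ⟨a, ha, rfl⟩ ⟨b, hb, rfl⟩ fun h => hab ?_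
    apply (MulAut.conj g).injective
    rw [map_mul, map_mul]
    exact h
  apply le_antisymm
  · intro w hw
    obtain ⟨z, hz, hzw | hzw⟩ := val2_form w
    · exact torus_mem_closure hzw (hW'4 w hw)
    · have hwy : w * QInf.y⁻¹ ∈ W' := mul_mem hw (inv_mem hy')
      have hval' : val2 (w * QInf.y⁻¹) = cHom z := by
        rw [map_mul, val2_inv, hzw, val2_y, mul_assoc, mul_inv_cancel₀ jv_ne_zero, mul_one]
      have hcl := torus_mem_closure hval' (hW'4 _ hwy)
      have hy_cl : QInf.y ∈ Subgroup.closure {QInf.t 2, QInf.y} :=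
        Subgroup.subset_closure (Set.mem_insert_iff.mpr (Or.inr rfl))
      have hw_eq : w = (w * QInf.y⁻¹) * QInf.y := by group
      rw [hw_eq]
      exact mul_mem hcl hy_cl
  · rw [Subgroup.closure_le]
    rintro x hx
    simp only [Set.mem_insert_iff, Set.mem_singleton_iff] at hx
    rcases hx with rfl | rfl
    · exact ht2'
    · exact hy'

end
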